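/- Let J ⊆ ℝ be an interval, let δ > 0, and let a, b : J → ℝ be C¹ functions satisfying δ ≤ a′(t) ≤ b′(t) for all t ∈ J. Define m(t) := min{a(t), b(t)} and m̃(t) := 1 + (a(t)+b(t))/2 − √(1 + ((b(t)−a(t))/2)²). Then m̃ is of class C¹ on J and for all t ∈ J: m(t) ≤ m̃(t) ≤ m(t) + 1, and m̃′(t) ≥ δ. -/

import Mathlib

open Real

/-- a `C¹` regularization `m̃` of `m = min{a,b}` with `m ≤ m̃ ≤ m + 1` and
`m̃′ ≥ δ`. -/
theorem smooth_min_regularization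
    (J : Set ℝ) (hJ : J.OrdConnected) (δ : ℝ) (hδ : 0 < δ)
    (a b : ℝ → ℝ) (ha : ContDiff ℝ 1 a) (hb : ContDiff ℝ 1 b)
    (hder : ∀ t ∈ J, δ ≤ deriv a t ∧ deriv a t ≤ deriv b t) :
    ContDiff ℝ 1
        (fun t => 1 + (a t + b t) / 2 - Real.sqrt (1 + ((b t - a t) / 2) ^ 2)) ∧
      ∀ t ∈ J,
        min (a t) (b t) ≤
            1 + (a t + b t) / 2 - Real.sqrt (1 + ((b t - a t) / 2) ^ 2) ∧
          1 + (a t + b t) / 2 - Real.sqrt (1 + ((b t - a t) / 2) ^ 2) ≤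
            min (a t) (b t) + 1 ∧
          δ ≤ deriv
              (fun s => 1 + (a s + b s) / 2 - Real.sqrt (1 + ((b s - a s) / 2) ^ 2)) t := by
  have hgpos : ∀ t : ℝ, (0:ℝ) < 1 + ((b t - a t) / 2) ^ 2 := fun t => by positivity
  have hg : ContDiff ℝ 1 (fun t => 1 + ((b t - a t) / 2) ^ 2) :=
    contDiff_const.add (((hb.sub ha).div_const 2).pow 2)
  have hC : ContDiff ℝ 1 (fun t => Real.sqrt (1 + ((b t - a t) / 2) ^ 2)) :=
    hg.sqrt fun t => (hgpos t).ne'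
  refine ⟨(contDiff_const.add ((ha.add hb).div_const 2)).sub hC, fun t ht => ?_⟩
  set u : ℝ := (b t - a t) / 2 with hu
  set s : ℝ := Real.sqrt (1 + u ^ 2) with hs
  have hs0 : 0 < s := Real.sqrt_pos.mpr (hgpos t)
  have hs2 : s ^ 2 = 1 + u ^ 2 := Real.sq_sqrt (hgpos t).le
  have hsu : u < s := by nlinarith
  have hsu2 : -s < u := by nlinarith
  have hbounds : min (a t) (b t) ≤ 1 + (a t + b t) / 2 - s ∧
      1 + (a t + b t) / 2 - s ≤ min (a t) (b t) + 1 := by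
    rcases le_total (a t) (b t) with h | h
    · rw [min_eq_left h]
      have hu0 : 0 ≤ u := by simp [hu]; linarith
      have h1 : s ≤ 1 + u := by nlinarith
      constructor <;> [nlinarith; skip]
      have : u ≤ s := hsu.le
      simp only [hu] at this ⊢; linarith
    · rw [min_eq_right h]
      have hu0 : u ≤ 0 := by simp [hu]; linarith
      have h1 : s ≤ 1 - u := by nlinarith
      constructor <;> [nlinarith; skip]
      have : -s ≤ u := hsu2.le
      simp only [hu] at this ⊢; linarith
  refine ⟨hbounds.1, hbounds.2, ?_⟩
  -- compute the derivative
  have hat : HasDerivAt a (deriv a t) t :=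
    ((ha.differentiable one_ne_zero) t).hasDerivAt
  have hbt : HasDerivAt b (deriv b t) t :=
    ((hb.differentiable one_ne_zero) t).hasDerivAt
  set A := deriv a t
  set B := deriv b t
  have hu' : HasDerivAt (fun x => (b x - a x) / 2) ((B - A) / 2) t :=
    (hbt.sub hat).div_const 2
  have hg' : HasDerivAt (fun x => 1 + ((b x - a x) / 2) ^ 2)
      (0 + (2 : ℕ) * ((b t - a t) / 2) ^ 1 * ((B - A) / 2)) t :=
    (hasDerivAt_const t (1:ℝ)).add (hu'.pow 2)
  have hsq : HasDerivAt (fun x => Real.sqrt (1 + ((b x - a x) / 2) ^ 2))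
      ((0 + (2 : ℕ) * ((b t - a t) / 2) ^ 1 * ((B - A) / 2)) / (2 * s)) t :=
    hg'.sqrt (hgpos t).ne'
  have hF : HasDerivAt (fun x => 1 + (a x + b x) / 2 - Real.sqrt (1 + ((b x - a x) / 2) ^ 2))
      ((A + B) / 2 - (0 + (2 : ℕ) * ((b t - a t) / 2) ^ 1 * ((B - A) / 2)) / (2 * s)) t := by
    have h1 : HasDerivAt (fun x => 1 + (a x + b x) / 2) ((A + B) / 2) t :=
      (zero_add ((A+B)/2)) ▸ ((hasDerivAt_const t (1:ℝ)).add ((hat.add hbt).div_const 2))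
    exact h1.sub hsq
  rw [hF.deriv]
  have hA : δ ≤ A := (hder t ht).1
  have hAB : A ≤ B := (hder t ht).2
  have heq : (A + B) / 2 - (0 + (2 : ℕ) * ((b t - a t) / 2) ^ 1 * ((B - A) / 2)) / (2 * s)
      = ((A + B) / 2 * s - u * ((B - A) / 2)) / s := by
    rw [← hu]
    field_simp
    ring
  rw [heq, le_div_iff₀ hs0]
  nlinarith [mul_nonneg (sub_nonneg.mpr hsu.le) (sub_nonneg.mpr (hA.trans hAB)),
    mul_nonneg (sub_nonneg.mpr hsu2.le) (sub_nonneg.mpr hA),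
    mul_pos hs0 hδ, (s - u) * (B - δ), (s + u) * (A - δ)]
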